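/- Let H_f be a symmetric n×n real matrix, let x ∈ ℝⁿ with x > 0 componentwise, let ε ∈ (0, 1), set μ = ε²/4, let β ∈ [ε, 1), and let g ∈ ℝⁿ. Let v ∈ ℝⁿ with ‖v‖ = 1 satisfy vᵀX̄H_fX̄v ≤ −ε/2, and define H = X̄(H_f + μX⁻²)X̄. Then vᵀHv ≤ −ε/4. Moreover, if d = −σ·min{ |vᵀHv| , β/‖X⁻¹X̄v‖∞ }·v, where σ = 1 if gᵀv ≥ 0 and σ = −1 otherwise, then gᵀd ≤ 0, ‖d‖ ≥ ε/4, and dᵀHd/‖d‖² ≤ −‖d‖ ≤ −ε/4. -/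
import Mathlib

open Matrix

noncomputable def euclNorm {n : ℕ} (v : Fin n → ℝ) : ℝ := Real.sqrt (∑ i, (v i)^2)

lemma euclNorm_smul {n : ℕ} (c : ℝ) (v : Fin n → ℝ) :
    euclNorm (c • v) = |c| * euclNorm v := by
  unfold euclNorm
  have : ∑ i, (c • v) i ^ 2 = c^2 * ∑ i, (v i)^2 := by
    rw [Finset.mul_sum]; apply Finset.sum_congr rfl; intro i _; simp [Pi.smul_apply]; ring
  rw [this, Real.sqrt_mul (sq_nonneg c), Real.sqrt_sq_eq_abs]

/-- let `Hf` be symmetric, `x > 0`, `ε ∈ (0,1)`, `μ = ε²/4`, `β ∈ [ε,1)`,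
`g ∈ ℝⁿ`, and `v` with `‖v‖ = 1` and `vᵀX̄HfX̄v ≤ −ε/2`. Set `H = X̄(Hf + μX⁻²)X̄`.
Then `vᵀHv ≤ −ε/4`; moreover, for `d = −σ min{|vᵀHv|, β/‖X⁻¹X̄v‖∞} v` with `σ = 1`
if `gᵀv ≥ 0` and `σ = −1` otherwise, we have `gᵀd ≤ 0`, `‖d‖ ≥ ε/4`, and
`dᵀHd/‖d‖² ≤ −‖d‖ ≤ −ε/4`. `euclNorm` denotes the Euclidean norm and `‖·‖` on
`Fin n → ℝ` is the max-norm. -/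
theorem stmt16 {n : ℕ} (Hf : Matrix (Fin n) (Fin n) ℝ) (hHf : Hf.IsSymm)
    (x : Fin n → ℝ) (hx : ∀ i, 0 < x i)
    (ε : ℝ) (hε : ε ∈ Set.Ioo (0:ℝ) 1)
    (μ : ℝ) (hμ : μ = ε^2 / 4)
    (β : ℝ) (hβ : β ∈ Set.Ico ε 1)
    (g : Fin n → ℝ)
    (v : Fin n → ℝ) (hv : euclNorm v = 1)
    (hcurv : v ⬝ᵥ ((Matrix.diagonal (fun i => min (x i) 1) * Hf
        * Matrix.diagonal (fun i => min (x i) 1)) *ᵥ v) ≤ -ε/2)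
    (H : Matrix (Fin n) (Fin n) ℝ)
    (hH : H = Matrix.diagonal (fun i => min (x i) 1)
        * (Hf + μ • Matrix.diagonal (fun i => ((x i)^2)⁻¹))
        * Matrix.diagonal (fun i => min (x i) 1))
    (σ : ℝ) (hσ : σ = if 0 ≤ g ⬝ᵥ v then (1:ℝ) else -1)
    (d : Fin n → ℝ)
    (hd : d = (-σ * min (|v ⬝ᵥ (H *ᵥ v)|)
      (β / ‖(fun i => (min (x i) 1 / x i) * v i : Fin n → ℝ)‖)) • v) :
    v ⬝ᵥ (H *ᵥ v) ≤ -ε/4 ∧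
      g ⬝ᵥ d ≤ 0 ∧
      ε/4 ≤ euclNorm d ∧
      d ⬝ᵥ (H *ᵥ d) / euclNorm d ^ 2 ≤ -euclNorm d ∧
      -euclNorm d ≤ -ε/4 := by
  obtain ⟨hε0, hε1⟩ := hε
  obtain ⟨hβε, hβ1⟩ := hβ
  have hμ0 : 0 ≤ μ := by rw [hμ]; positivity
  have hxb : ∀ i, 0 < min (x i) 1 := fun i => lt_min (hx i) one_pos
  -- sum of squares of v is 1
  have hsum : ∑ i, (v i)^2 = 1 := by
    have h0 : (0:ℝ) ≤ ∑ i, (v i)^2 := Finset.sum_nonneg fun i _ => sq_nonneg _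
    have h1 := Real.sq_sqrt h0
    rw [euclNorm] at hv
    rw [hv] at h1
    linarith [h1]
  have hvi : ∀ i, |v i| ≤ 1 := by
    intro i
    have : (v i)^2 ≤ 1 := by
      have h2 : (v i)^2 ≤ ∑ j, (v j)^2 := by
        simpa using Finset.single_le_sum (f := fun j => (v j)^2)
          (fun j _ => sq_nonneg (v j)) (Finset.mem_univ i)
      linarith [hsum]
    nlinarith [abs_nonneg (v i), sq_abs (v i)]
  -- decompose H
  have hHdec : H = Matrix.diagonal (fun i => min (x i) 1) * Hf
        * Matrix.diagonal (fun i => min (x i) 1)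
      + μ • Matrix.diagonal (fun i => min (x i) 1 * ((x i)^2)⁻¹ * min (x i) 1) := by
    rw [hH, Matrix.mul_add, Matrix.add_mul]
    congr 1
    rw [Matrix.mul_smul, Matrix.smul_mul, Matrix.diagonal_mul_diagonal,
      Matrix.diagonal_mul_diagonal]
  set S : ℝ := ∑ i, min (x i) 1 * ((x i)^2)⁻¹ * min (x i) 1 * (v i)^2 with hS
  have hquad : v ⬝ᵥ (H *ᵥ v)
      = v ⬝ᵥ ((Matrix.diagonal (fun i => min (x i) 1) * Hf
        * Matrix.diagonal (fun i => min (x i) 1)) *ᵥ v) + μ * S := by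
    rw [hHdec, Matrix.add_mulVec, dotProduct_add, Matrix.smul_mulVec, dotProduct_smul]
    congr 1
    simp only [smul_eq_mul]
    congr 1
    simp only [dotProduct, Matrix.mulVec_diagonal, hS]
    apply Finset.sum_congr rfl
    intro i _
    ring
  have hSle : S ≤ 1 := by
    have hstep : S ≤ ∑ i, (v i)^2 := by
      rw [hS]
      apply Finset.sum_le_sum
      intro i _
      have hxi := hx i
      have hinv : (0:ℝ) < ((x i)^2)⁻¹ := inv_pos.mpr (pow_pos hxi 2)
      have hx2 : ((x i)^2)⁻¹ * (x i)^2 = 1 := inv_mul_cancel₀ (ne_of_gt (pow_pos hxi 2))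
      have hxb2 : min (x i) 1 * min (x i) 1 ≤ (x i)^2 := by
        nlinarith [min_le_left (x i) 1, hxb i]
      have h1 : min (x i) 1 * ((x i)^2)⁻¹ * min (x i) 1 ≤ 1 := by
        nlinarith [mul_le_mul_of_nonneg_left hxb2 (le_of_lt hinv)]
      simpa using mul_le_mul_of_nonneg_right h1 (sq_nonneg (v i))
    rw [hsum] at hstep
    exact hstep
  have hS0 : 0 ≤ S := by
    apply Finset.sum_nonneg
    intro i _
    have h1 := hxb i
    have hinv : (0:ℝ) < ((x i)^2)⁻¹ := inv_pos.mpr (pow_pos (hx i) 2)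
    positivity
  -- first goal
  have hq4 : v ⬝ᵥ (H *ᵥ v) ≤ -ε/4 := by
    rw [hquad]
    nlinarith [mul_le_mul_of_nonneg_left hSle hμ0]
  set q : ℝ := v ⬝ᵥ (H *ᵥ v) with hqdef
  -- the sup norm
  set u : Fin n → ℝ := fun i => (min (x i) 1 / x i) * v i with hu
  have hNle : ‖u‖ ≤ 1 := by
    rw [pi_norm_le_iff_of_nonneg zero_le_one]
    intro i
    have hratio : min (x i) 1 / x i ≤ 1 := by
      rw [div_le_one (hx i)]; exact min_le_left _ _
    have hratio0 : 0 ≤ min (x i) 1 / x i := le_of_lt (div_pos (hxb i) (hx i))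
    calc ‖u i‖ = (min (x i) 1 / x i) * |v i| := by
          simp only [hu, Real.norm_eq_abs, abs_mul, abs_of_nonneg hratio0]
      _ ≤ 1 * 1 := mul_le_mul hratio (hvi i) (abs_nonneg _) zero_le_one
      _ = 1 := one_mul 1
  have hN0 : 0 < ‖u‖ := by
    rw [norm_pos_iff]
    intro h
    have hv0 : ∀ i, v i = 0 := by
      intro i
      have := congrFun h i
      simp only [hu, Pi.zero_apply] at this
      have hratio0 : min (x i) 1 / x i ≠ 0 := ne_of_gt (div_pos (hxb i) (hx i))
      exact (mul_eq_zero.mp this).resolve_left hratio0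
    have : ∑ i, (v i)^2 = 0 := by
      apply Finset.sum_eq_zero; intro i _; rw [hv0 i]; ring
    rw [this] at hsum; norm_num at hsum
  set t : ℝ := min (|q|) (β / ‖u‖) with ht
  have hqneg : q < 0 := lt_of_le_of_lt hq4 (by linarith)
  have habsq : |q| = -q := abs_of_neg hqneg
  have hβdiv : β ≤ β / ‖u‖ := by
    rw [le_div_iff₀ hN0]
    nlinarith [hβε]
  have htge : ε/4 ≤ t := by
    apply le_min
    · rw [habsq]; linarith
    · linarith
  have ht0 : 0 < t := lt_of_lt_of_le (by linarith) htge
  have hσabs : |σ| = 1 := by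
    rw [hσ]; split <;> norm_num
  have hcoef : |(-σ * t)| = t := by
    rw [abs_mul, abs_neg, hσabs, one_mul, abs_of_pos ht0]
  have hnd : euclNorm d = t := by
    rw [hd, euclNorm_smul, hv, hcoef, mul_one]
  refine ⟨hq4, ?_, ?_, ?_, ?_⟩
  · rw [hd, dotProduct_smul, smul_eq_mul]
    rw [hσ]
    split_ifs with hgv
    · have h1 := mul_nonneg (le_of_lt ht0) hgv
      linarith
    · push_neg at hgv
      have h1 := mul_nonpos_of_nonneg_of_nonpos (le_of_lt ht0) (le_of_lt hgv)
      linarith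
  · rw [hnd]; exact htge
  · rw [hnd, hd, smul_dotProduct, Matrix.mulVec_smul, dotProduct_smul,
      smul_eq_mul, smul_eq_mul]
    have hσsq : σ * σ = 1 := by rw [hσ]; split <;> norm_num
    have hc2 : -σ * t * (-σ * t * q) = σ * σ * (t^2 * q) := by ring
    rw [hσsq, one_mul] at hc2
    rw [hc2]
    rw [mul_comm, mul_div_assoc, div_self (pow_ne_zero 2 (ne_of_gt ht0)), mul_one]
    have : t ≤ |q| := min_le_left _ _
    rw [habsq] at this
    linarith
  · rw [hnd]; linarith
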